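/- arXiv:0804.2694 — 10 statements merged into one kernel-verified Lean document; each statement's English description precedes it below -/
import Mathlib

section
/- The space of resolvable loads on a framework is contained in the space of equilibrium loads: if a stress resolves a load F, then the sum over all vertices i of the force pairs (p_i, f_i), interpreted as bivectors p_i ∧ f_i in Λ²ℝ^{d+1} (embedding E^d as the affine hyperplane x⁰=1), is zero. -/
open ExteriorAlgebra

/-- a resolvable load is an equilibrium load: its total bivector
`∑ i, p_i ∧ f_i` in `Λ²ℝ^{d+1}` vanishes. -/
theorem resolvable_load_is_equilibrium {V : Type*} [Fintype V] {d : ℕ}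
    (Edge : V → V → Prop)
    (P : V → Fin d → ℝ) (hP : ∀ i j, Edge i j → P i ≠ P j)
    (ω : V → V → ℝ) (hsym : ∀ i j, ω i j = ω j i)
    (hsupp : ∀ i j, ω i j ≠ 0 → Edge i j)
    (F : V → Fin d → ℝ)
    (hres : ∀ i, F i + ∑ j, ω i j • (P j - P i) = 0) :
    ∑ i, (ι ℝ (Fin.cons 1 (P i) : Fin (d+1) → ℝ)) *
         (ι ℝ (Fin.cons 0 (F i) : Fin (d+1) → ℝ)) = 0 := by
  set q : V → Fin (d+1) → ℝ := fun i => Fin.cons 1 (P i) with hq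
  have hF : ∀ i, (Fin.cons 0 (F i) : Fin (d+1) → ℝ)
      = ∑ j, ω i j • (q i - q j) := by
    intro i
    have h := hres i
    funext k
    refine Fin.cases ?_ ?_ k
    · simp [Finset.sum_apply, hq]
    · intro m
      have h' := congrFun h m
      simp only [Pi.add_apply, Finset.sum_apply, Pi.smul_apply, Pi.sub_apply,
        Pi.zero_apply, smul_eq_mul] at h'
      simp only [Fin.cons_succ, Finset.sum_apply, Pi.smul_apply, Pi.sub_apply,
        smul_eq_mul, hq]
      have hsum : ∑ x, ω i x * (P i m - P x m) = -∑ x, ω i x * (P x m - P i m) := by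
        rw [← Finset.sum_neg_distrib]
        exact Finset.sum_congr rfl fun x _ => by ring
      linarith
  set T : ExteriorAlgebra ℝ (Fin (d+1) → ℝ) :=
    ∑ i, ∑ j, ω i j • (ι ℝ (q i) * ι ℝ (q j)) with hT
  have hswap : ∀ i j : V, ι ℝ (q i) * ι ℝ (q j) = -(ι ℝ (q j) * ι ℝ (q i)) :=
    fun i j => eq_neg_of_add_eq_zero_left (ι_add_mul_swap (q i) (q j))
  have key : (∑ i, ι ℝ (q i) * ι ℝ (Fin.cons 0 (F i) : Fin (d+1) → ℝ)) = -T := by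
    rw [hT, ← Finset.sum_neg_distrib]
    refine Finset.sum_congr rfl fun i _ => ?_
    rw [hF i, map_sum, Finset.mul_sum, ← Finset.sum_neg_distrib]
    refine Finset.sum_congr rfl fun j _ => ?_
    rw [map_smul, map_sub, mul_smul_comm, mul_sub, ι_sq_zero, zero_sub, smul_neg]
  have hTT : T = -T := by
    calc T = ∑ j, ∑ i, ω i j • (ι ℝ (q i) * ι ℝ (q j)) := Finset.sum_comm
    _ = -T := by
        rw [hT, ← Finset.sum_neg_distrib]
        refine Finset.sum_congr rfl fun j _ => ?_
        rw [← Finset.sum_neg_distrib]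
        refine Finset.sum_congr rfl fun i _ => ?_
        rw [hsym i j, hswap i j, smul_neg]
  have hT0 : T = 0 := by
    have h2 : (2 : ℝ) • T = 0 := by
      rw [two_smul]
      exact add_eq_zero_iff_eq_neg.mpr hTT
    rcases smul_eq_zero.mp h2 with h | h
    · norm_num at h
    · exact h
  rw [key, hT0, neg_zero]
end

section
/- Second principle of virtual work: a velocity field Q on a framework whose vertices affinely span E^d annihilates every equilibrium load if and only if Q is the restriction of an infinitesimal isometry of E^d, i.e. there exist a skew-symmetric matrix A and a vector b with q_i = A p_i + b for all i. -/
open Matrix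

open scoped RealInnerProductSpace

section Aux

variable {V : Type*} [Fintype V] {d : ℕ}

/-- The submodule of trivial velocity fields (restrictions of infinitesimal isometries),
viewed inside Euclidean space. -/
def trivSub (P : V → Fin d → ℝ) : Submodule ℝ (EuclideanSpace ℝ (V × Fin d)) where
  carrier := {x | ∃ A : Matrix (Fin d) (Fin d) ℝ, ∃ b : Fin d → ℝ,
    Aᵀ = -A ∧ ∀ p : V × Fin d, x p = A.mulVec (P p.1) p.2 + b p.2}
  add_mem' := by
    rintro x y ⟨A, b, hA, hx⟩ ⟨A', b', hA', hy⟩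
    refine ⟨A + A', b + b', by rw [Matrix.transpose_add, hA, hA', neg_add], fun p => ?_⟩
    have : (x + y) p = x p + y p := rfl
    rw [this, hx p, hy p, Matrix.add_mulVec]
    simp [Pi.add_apply]; ring
  smul_mem' := by
    rintro c x ⟨A, b, hA, hx⟩
    refine ⟨c • A, c • b, by rw [Matrix.transpose_smul, hA, smul_neg], fun p => ?_⟩
    have : (c • x) p = c * x p := rfl
    rw [this, hx p, Matrix.smul_mulVec]
    simp [Pi.smul_apply]; ring
  zero_mem' := ⟨0, 0, by simp, fun p => by simp [Matrix.zero_mulVec]⟩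

lemma sum_skew_symm {n : ℕ} (A M : Matrix (Fin n) (Fin n) ℝ) (hA : Aᵀ = -A)
    (hM : ∀ k l, M k l = M l k) : ∑ k, ∑ l, A k l * M l k = 0 := by
  have h2 : ∀ k l : Fin n, A l k = -A k l := fun k l => by
    have := congrFun (congrFun hA k) l
    simpa [Matrix.transpose_apply] using this
  have h1 : ∑ k, ∑ l, A k l * M l k = ∑ k, ∑ l, A l k * M k l := Finset.sum_comm
  have h3 : ∑ k, ∑ l, A l k * M k l = -∑ k, ∑ l, A k l * M l k := by
    rw [← Finset.sum_neg_distrib]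
    refine Finset.sum_congr rfl fun k _ => ?_
    rw [← Finset.sum_neg_distrib]
    refine Finset.sum_congr rfl fun l _ => ?_
    rw [h2 k l, hM k l]; ring
  linarith [h1, h3]

end Aux

/-- second principle of virtual work: for a framework whose vertices
affinely span `E^d`, a velocity field annihilates every equilibrium load iff it is
the restriction of an infinitesimal isometry `x ↦ Ax + b` with `A` skew-symmetric. -/
theorem annihilates_equilibrium_iff_trivial {V : Type*} [Fintype V] {d : ℕ}
    (P : V → Fin d → ℝ)
    (hspan : affineSpan ℝ (Set.range P) = ⊤)
    (Q : V → Fin d → ℝ) :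
    (∀ F : V → Fin d → ℝ,
      ((∑ i, F i) = 0 ∧ ∀ k l, (∑ i, (P i k * F i l - F i k * P i l)) = 0) →
      ∑ i, ∑ k, Q i k * F i k = 0) ↔
    ∃ (A : Matrix (Fin d) (Fin d) ℝ) (b : Fin d → ℝ),
      Aᵀ = -A ∧ ∀ i, Q i = A.mulVec (P i) + b := by
  -- key computation: pairing of a trivial field with an equilibrium load vanishes
  have key : ∀ (A : Matrix (Fin d) (Fin d) ℝ) (b : Fin d → ℝ), Aᵀ = -A →
      ∀ F : V → Fin d → ℝ,
      ((∑ i, F i) = 0 ∧ ∀ k l, (∑ i, (P i k * F i l - F i k * P i l)) = 0) →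
      ∑ i, ∑ k, (A.mulVec (P i) k + b k) * F i k = 0 := by
    intro A b hA F ⟨hF1, hF2⟩
    have hFk : ∀ k, ∑ i, F i k = 0 := by
      intro k
      have := congrFun hF1 k
      simpa [Finset.sum_apply] using this
    have hM : ∀ k l, (∑ i, P i k * F i l) = ∑ i, P i l * F i k := by
      intro k l
      have h := hF2 k l
      rw [Finset.sum_sub_distrib, sub_eq_zero] at h
      rw [h]
      exact Finset.sum_congr rfl fun i _ => by ring
    have expand : ∑ i, ∑ k, (A.mulVec (P i) k + b k) * F i k =
        (∑ k, ∑ l, A k l * ∑ i, P i l * F i k) + ∑ k, b k * ∑ i, F i k := by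
      rw [Finset.sum_comm (γ := V)]
      rw [← Finset.sum_add_distrib]
      refine Finset.sum_congr rfl fun k _ => ?_
      have hx : ∀ x, ((A *ᵥ P x) k + b k) * F x k =
          (∑ l, A k l * (P x l * F x k)) + b k * F x k := by
        intro x
        simp [Matrix.mulVec, dotProduct, Finset.sum_mul, add_mul, mul_assoc]
      rw [Finset.sum_congr rfl fun x _ => hx x, Finset.sum_add_distrib, Finset.sum_comm,
        Finset.mul_sum]
      congr 1
      exact Finset.sum_congr rfl fun l _ => (Finset.mul_sum _ _ _).symm
    rw [expand]
    have h1 : ∑ k, ∑ l, A k l * ∑ i, P i l * F i k = 0 :=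
      sum_skew_symm A (fun k l => ∑ i, P i k * F i l) hA hM
    have h2 : ∑ k, b k * ∑ i, F i k = 0 := by
      simp [hFk]
    rw [h1, h2, add_zero]
  constructor
  · -- hard direction
    intro h
    set y : EuclideanSpace ℝ (V × Fin d) := WithLp.toLp 2 (fun p : V × Fin d => Q p.1 p.2) with hy
    have hyT : y ∈ trivSub P := by
      rw [← Submodule.orthogonal_orthogonal (trivSub P)]
      intro u hu
      -- u is orthogonal to all trivial fields, hence an equilibrium load
      set F : V → Fin d → ℝ := fun i k => u (i, k) with hF
      have inner_eq : ∀ x : EuclideanSpace ℝ (V × Fin d),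
          ⟪x, u⟫ = ∑ i, ∑ k, x (i, k) * F i k := by
        intro x
        rw [PiLp.inner_apply, Fintype.sum_prod_type]
        refine Finset.sum_congr rfl fun i _ => Finset.sum_congr rfl fun k _ => ?_
        simp [hF, RCLike.inner_apply, mul_comm]
      -- equilibrium condition (a)
      have ha : (∑ i, F i) = 0 := by
        funext k
        have hxmem : (show EuclideanSpace ℝ (V × Fin d) from
            WithLp.toLp 2 (fun p : V × Fin d => if p.2 = k then (1:ℝ) else 0)) ∈ trivSub P := by
          refine ⟨0, Pi.single k 1, by simp, fun p => ?_⟩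
          simp [Matrix.zero_mulVec, Pi.single_apply]
        have h0 := hu _ hxmem
        rw [inner_eq] at h0
        simp only [Finset.sum_apply, Pi.zero_apply]
        rw [← h0]
        refine (Finset.sum_congr rfl fun i _ => ?_).symm
        simp
      -- equilibrium condition (b)
      have hb : ∀ k l, (∑ i, (P i k * F i l - F i k * P i l)) = 0 := by
        intro k l
        set A : Matrix (Fin d) (Fin d) ℝ :=
          Matrix.single l k 1 - Matrix.single k l 1 with hAdef
        have hAskew : Aᵀ = -A := by
          ext a c
          simp [hAdef, Matrix.single, Matrix.transpose_apply, and_comm]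
        have hxmem : (show EuclideanSpace ℝ (V × Fin d) from
            WithLp.toLp 2 (fun p : V × Fin d => A.mulVec (P p.1) p.2)) ∈ trivSub P := by
          refine ⟨A, 0, hAskew, fun p => ?_⟩
          simp
        have h0 := hu _ hxmem
        rw [inner_eq] at h0
        rw [← h0]
        refine (Finset.sum_congr rfl fun i _ => ?_).symm
        have hmv : A.mulVec (P i) =
            Function.update (0 : Fin d → ℝ) l (P i k) - Function.update (0 : Fin d → ℝ) k (P i l) := by
          rw [hAdef, Matrix.sub_mulVec, Matrix.single_mulVec, Matrix.single_mulVec]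
          simp
        show ∑ m, (A *ᵥ P i) m * F i m = _
        rw [hmv]
        simp only [Pi.sub_apply, sub_mul]
        rw [Finset.sum_sub_distrib]
        simp [Function.update_apply]
        ring
      have := h F ⟨ha, hb⟩
      rw [real_inner_comm, inner_eq y]
      simpa [hy, hF] using this
    obtain ⟨A, b, hA, hx⟩ := hyT
    exact ⟨A, b, hA, fun i => funext fun k => hx (i, k)⟩
  · rintro ⟨A, b, hA, hQ⟩ F hF
    have : ∀ i k, Q i k = A.mulVec (P i) k + b k := by
      intro i k
      rw [hQ i]; rfl
    rw [Finset.sum_congr rfl fun i _ => Finset.sum_congr rfl fun k _ => by rw [this i k]]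
    exact key A b hA F hF
end

section
/- For a framework in E^d whose vertices affinely span E^d, the space of equilibrium loads has dimension d·|V| − (d+1 choose 2). -/
open Matrix

/-- The linear map taking a load to its total force. -/
noncomputable def totalForce (V : Type*) [Fintype V] (d : ℕ) :
    (V → Fin d → ℝ) →ₗ[ℝ] (Fin d → ℝ) :=
  ∑ i : V, LinearMap.proj i

/-- The torque (as a matrix `p f^T − f p^T`) of a force `f` applied at `p`, linear in `f`. -/
noncomputable def torqueAt {d : ℕ} (p : Fin d → ℝ) :
    (Fin d → ℝ) →ₗ[ℝ] Matrix (Fin d) (Fin d) ℝ where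
  toFun f := fun k l => p k * f l - f k * p l
  map_add' x y := by
    funext k l
    show p k * (x + y) l - (x + y) k * p l = (p k * x l - x k * p l) + (p k * y l - y k * p l)
    simp only [Pi.add_apply, Matrix.add_apply]
    ring
  map_smul' c x := by
    funext k l
    show p k * (c • x) l - (c • x) k * p l = c * (p k * x l - x k * p l)
    simp only [Pi.smul_apply, Matrix.smul_apply, smul_eq_mul, RingHom.id_apply]
    ring

/-- The subspace of equilibrium loads: total force and total torque vanish. -/
noncomputable def equilibriumLoads {V : Type*} [Fintype V] {d : ℕ} (P : V → Fin d → ℝ) :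
    Submodule ℝ (V → Fin d → ℝ) :=
  LinearMap.ker ((totalForce V d).prod (∑ i : V, (torqueAt (P i)).comp (LinearMap.proj i)))

namespace EqLoadsAux

variable {V : Type*} [Fintype V] {d : ℕ}

/-- The total torque map. -/
noncomputable def torqueSum (P : V → Fin d → ℝ) :
    (V → Fin d → ℝ) →ₗ[ℝ] Matrix (Fin d) (Fin d) ℝ :=
  ∑ i : V, (torqueAt (P i)).comp (LinearMap.proj i)

lemma torqueAt_apply (p f : Fin d → ℝ) (k l : Fin d) :
    torqueAt p f k l = p k * f l - f k * p l := rfl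

lemma totalForce_apply (F : V → Fin d → ℝ) : totalForce V d F = ∑ i, F i := by
  simp [totalForce]

lemma torqueSum_apply (P : V → Fin d → ℝ) (F : V → Fin d → ℝ) :
    torqueSum P F = ∑ i, torqueAt (P i) (F i) := by
  simp [torqueSum, LinearMap.sum_apply]

lemma torqueAt_transpose (p f : Fin d → ℝ) : (torqueAt p f)ᵀ = -torqueAt p f := by
  ext k l
  show p l * f k - f l * p k = -(p k * f l - f k * p l)
  ring

lemma torqueAt_swap (p f : Fin d → ℝ) : torqueAt f p = -torqueAt p f := by
  ext k l
  show f k * p l - p k * f l = -(p k * f l - f k * p l)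
  ring

variable [DecidableEq V]

lemma totalForce_single (i : V) (f : Fin d → ℝ) :
    totalForce V d (Pi.single i f) = f := by
  rw [totalForce_apply]
  simp [Finset.sum_pi_single']

lemma torqueSum_single (P : V → Fin d → ℝ) (i : V) (f : Fin d → ℝ) :
    torqueSum P (Pi.single i f) = torqueAt (P i) f := by
  rw [torqueSum_apply]
  rw [Finset.sum_eq_single i]
  · simp
  · intro j _ hj
    rw [Pi.single_eq_of_ne hj, map_zero]
  · intro h; exact absurd (Finset.mem_univ i) h

/-- The submodule of torques realizable by zero-total-force loads. -/
noncomputable def Q (P : V → Fin d → ℝ) : Submodule ℝ (Matrix (Fin d) (Fin d) ℝ) :=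
  Submodule.map (torqueSum P) (LinearMap.ker (totalForce V d))

lemma torque_mem_Q (P : V → Fin d → ℝ) (hspan : affineSpan ℝ (Set.range P) = ⊤)
    (x f : Fin d → ℝ) : torqueAt x f ∈ Q P := by
  have hvs : vectorSpan ℝ (Set.range P) = ⊤ :=
    AffineSubspace.vectorSpan_eq_top_of_affineSpan_eq_top ℝ _ _ hspan
  have hle : vectorSpan ℝ (Set.range P) ≤ (Q P).comap (-(torqueAt f)) := by
    rw [vectorSpan_def, Submodule.span_le]
    rintro v ⟨-, ⟨i, rfl⟩, -, ⟨j, rfl⟩, rfl⟩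
    rw [SetLike.mem_coe, Submodule.mem_comap]
    refine ⟨Pi.single i f - Pi.single j f, ?_, ?_⟩
    · simp only [SetLike.mem_coe, LinearMap.mem_ker, map_sub, totalForce_single, sub_self]
    · rw [map_sub, torqueSum_single, torqueSum_single]
      simp only [LinearMap.neg_apply, vsub_eq_sub, map_sub]
      rw [torqueAt_swap (P i) f, torqueAt_swap (P j) f]
      abel
  have hx : x ∈ (Q P).comap (-(torqueAt f)) := by
    rw [hvs] at hle
    exact hle Submodule.mem_top
  rw [Submodule.mem_comap, LinearMap.neg_apply, ← torqueAt_swap] at hx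
  exact hx

lemma skew_mem_Q (P : V → Fin d → ℝ) (hspan : affineSpan ℝ (Set.range P) = ⊤)
    (M : Matrix (Fin d) (Fin d) ℝ) (hM : Mᵀ = -M) : M ∈ Q P := by
  have hdecomp : M = (2⁻¹ : ℝ) • ∑ k : Fin d, ∑ l : Fin d,
      M k l • torqueAt (Pi.single k 1) (Pi.single l 1) := by
    ext a b
    have hba : M b a = -M a b := by
      have := congrFun (congrFun hM a) b
      simpa [Matrix.transpose_apply] using this
    simp only [Matrix.smul_apply, Matrix.sum_apply, torqueAt_apply, Pi.single_apply,
      smul_eq_mul, mul_sub, mul_ite, mul_one, mul_zero, ite_mul, one_mul, zero_mul]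
    simp only [Finset.sum_sub_distrib]
    simp [Finset.sum_ite_eq, Finset.sum_ite_eq', hba]
    ring
  rw [hdecomp]
  refine Submodule.smul_mem _ _ (Submodule.sum_mem _ fun k _ => Submodule.sum_mem _ fun l _ =>
    Submodule.smul_mem _ _ (torque_mem_Q P hspan _ _))

/-- Extracting the strictly upper-triangular entries, as a linear map. -/
noncomputable def upperMap (d : ℕ) :
    Matrix (Fin d) (Fin d) ℝ →ₗ[ℝ] ({p : Fin d × Fin d // p.1 < p.2} → ℝ) where
  toFun M p := M p.1.1 p.1.2
  map_add' _ _ := rfl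
  map_smul' _ _ := rfl

/-- Building a skew matrix from its strictly upper-triangular entries. -/
noncomputable def skewify {d : ℕ} (y : {p : Fin d × Fin d // p.1 < p.2} → ℝ) :
    Matrix (Fin d) (Fin d) ℝ :=
  fun k l => if h : k < l then y ⟨(k, l), h⟩ else if h' : l < k then -y ⟨(l, k), h'⟩ else 0

lemma skewify_transpose {d : ℕ} (y : {p : Fin d × Fin d // p.1 < p.2} → ℝ) :
    (skewify y)ᵀ = -skewify y := by
  ext k l
  show skewify y l k = -skewify y k l
  unfold skewify
  rcases lt_trichotomy k l with h | h | h
  · rw [dif_neg (asymm h), dif_pos h, dif_pos h]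
  · subst h
    simp
  · rw [dif_pos h, dif_neg (asymm h), dif_pos h, neg_neg]

lemma upperMap_skewify {d : ℕ} (y : {p : Fin d × Fin d // p.1 < p.2} → ℝ) :
    upperMap d (skewify y) = y := by
  funext p
  obtain ⟨⟨k, l⟩, h⟩ := p
  show skewify y k l = y ⟨(k, l), h⟩
  unfold skewify
  rw [dif_pos h]

lemma card_ltPairs (d : ℕ) :
    Fintype.card {p : Fin d × Fin d // p.1 < p.2} = d.choose 2 := by
  have e : {p : Fin d × Fin d // p.1 < p.2} ≃ Σ l : Fin d, Fin l :=
    { toFun := fun p => ⟨p.1.2, ⟨p.1.1, p.2⟩⟩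
      invFun := fun s => ⟨(⟨s.2.1, s.2.isLt.trans s.1.isLt⟩, s.1), s.2.isLt⟩
      left_inv := fun p => rfl
      right_inv := fun s => rfl }
  rw [Fintype.card_congr e, Fintype.card_sigma]
  simp only [Fintype.card_fin]
  rw [Fin.sum_univ_eq_sum_range (fun i => i) d]
  rw [Nat.choose_two_right]
  have h1 := Finset.sum_range_id_mul_two d
  generalize d * (d - 1) = n at h1 ⊢
  omega

end EqLoadsAux

open EqLoadsAux in
/-- for a framework whose vertices affinely span `E^d`, the space of
equilibrium loads has dimension `d·|V| − (d+1 choose 2)`. -/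
theorem finrank_equilibriumLoads {V : Type*} [Fintype V] {d : ℕ} (P : V → Fin d → ℝ)
    (hspan : affineSpan ℝ (Set.range P) = ⊤) :
    Module.finrank ℝ (equilibriumLoads P) = d * Fintype.card V - (d + 1).choose 2 := by
  classical
  obtain ⟨x, i0, -⟩ := AffineSubspace.nonempty_of_affineSpan_eq_top ℝ _ _ hspan
  have hskew : ∀ F : V → Fin d → ℝ, (torqueSum P F)ᵀ = -(torqueSum P F) := by
    intro F
    rw [torqueSum_apply, Matrix.transpose_sum, ← Finset.sum_neg_distrib]
    exact Finset.sum_congr rfl fun i _ => torqueAt_transpose _ _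
  have hA : ∀ M : Matrix (Fin d) (Fin d) ℝ, Mᵀ = -M →
      ∃ F, totalForce V d F = 0 ∧ torqueSum P F = M := by
    intro M hM
    obtain ⟨F, hF, hFM⟩ := skew_mem_Q P hspan M hM
    exact ⟨F, LinearMap.mem_ker.mp hF, hFM⟩
  have hB : ∀ g : Fin d → ℝ, ∃ F, totalForce V d F = g ∧ torqueSum P F = 0 := by
    intro g
    obtain ⟨F2, hF2, hF2M⟩ := hA (torqueAt (P i0) g) (torqueAt_transpose _ _)
    refine ⟨Pi.single i0 g - F2, ?_, ?_⟩
    · rw [map_sub, totalForce_single, hF2, sub_zero]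
    · rw [map_sub, torqueSum_single, hF2M, sub_self]
  set L' := (totalForce V d).prod ((upperMap d).comp (torqueSum P)) with hL'
  have hker : equilibriumLoads P = LinearMap.ker L' := by
    ext F
    show F ∈ LinearMap.ker ((totalForce V d).prod (torqueSum P)) ↔ _
    simp only [LinearMap.mem_ker, hL', LinearMap.prod_apply, Function.prod, LinearMap.comp_apply,
      Prod.mk_eq_zero]
    constructor
    · rintro ⟨h1, h2⟩
      exact ⟨h1, by rw [h2, map_zero]⟩
    · rintro ⟨h1, h2⟩
      refine ⟨h1, ?_⟩
      have hsk := hskew F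
      ext a b
      show torqueSum P F a b = 0
      rcases lt_trichotomy a b with h | h | h
      · exact congrFun h2 ⟨(a, b), h⟩
      · subst h
        have := congrFun (congrFun hsk a) a
        simp only [Matrix.transpose_apply, Matrix.neg_apply] at this
        linarith
      · have h1' : torqueSum P F b a = 0 := congrFun h2 ⟨(b, a), h⟩
        have := congrFun (congrFun hsk b) a
        simp only [Matrix.transpose_apply, Matrix.neg_apply] at this
        rw [this, h1', neg_zero]
  have hrange : LinearMap.range L' = ⊤ := by
    rw [LinearMap.range_eq_top]
    rintro ⟨g, y⟩
    obtain ⟨F1, hF1, hF1M⟩ := hB g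
    obtain ⟨F2, hF2, hF2M⟩ := hA (skewify y) (skewify_transpose y)
    refine ⟨F1 + F2, ?_⟩
    show ((totalForce V d) (F1 + F2), upperMap d (torqueSum P (F1 + F2))) = (g, y)
    rw [map_add, hF1, hF2, add_zero, map_add, hF1M, hF2M, zero_add, upperMap_skewify]
  have hfin := LinearMap.finrank_range_add_finrank_ker L'
  rw [hrange, finrank_top] at hfin
  have hcod : Module.finrank ℝ ((Fin d → ℝ) × ({p : Fin d × Fin d // p.1 < p.2} → ℝ))
      = d + d.choose 2 := by
    rw [Module.finrank_prod, Module.finrank_pi, Module.finrank_pi, Fintype.card_fin,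
      card_ltPairs]
  have hdom : Module.finrank ℝ (V → Fin d → ℝ) = Fintype.card V * d := by
    rw [Module.finrank_pi_fintype]
    simp [Module.finrank_pi, Finset.sum_const, Finset.card_univ]
  have hch : (d + 1).choose 2 = d + d.choose 2 := by
    rw [Nat.choose_succ_succ, Nat.choose_one_right]
  rw [hker]
  rw [hcod, hdom, Nat.mul_comm (Fintype.card V) d] at hfin
  generalize d * Fintype.card V = n at hfin ⊢
  omega
end

section
/- Affine invariance of infinitesimal motions: let Φ(x) = Ax + b be an affine isomorphism of E^d (A invertible). A velocity field Q = (q_i) is an infinitesimal motion of the framework P if and only if the velocity field ((A^T)^{-1} q_i) is an infinitesimal motion of the framework Φ∘P; moreover Q is trivial iff its image is trivial. -/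
open Matrix

lemma aux_dot {d : ℕ} (A : Matrix (Fin d) (Fin d) ℝ) (hA : IsUnit A.det)
    (u v : Fin d → ℝ) : (A.mulVec u) ⬝ᵥ ((Aᵀ)⁻¹.mulVec v) = u ⬝ᵥ v := by
  have hAT : IsUnit Aᵀ.det := by rwa [det_transpose]
  rw [dotProduct_comm, dotProduct_mulVec, ← mulVec_transpose, mulVec_mulVec,
    mul_nonsing_inv _ hAT, one_mulVec, dotProduct_comm]

/-- affine invariance of infinitesimal motions: for an affine
isomorphism `Φ(x) = Ax + b`, a velocity field `Q` is an infinitesimal motion of `P`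
iff `((Aᵀ)⁻¹ q_i)` is an infinitesimal motion of `Φ∘P`; and `Q` is trivial iff its
image is trivial. -/
theorem affine_invariance_kinematic {V : Type*} [Fintype V] {d : ℕ}
    (Edge : V → V → Prop)
    (P : V → Fin d → ℝ) (hP : ∀ i j, Edge i j → P i ≠ P j)
    (A : Matrix (Fin d) (Fin d) ℝ) (hA : IsUnit A.det) (b : Fin d → ℝ)
    (Q : V → Fin d → ℝ) :
    ((∀ i j, Edge i j → ∑ k, (P i k - P j k) * (Q i k - Q j k) = 0) ↔
      (∀ i j, Edge i j →
        ∑ k, ((A.mulVec (P i) + b) k - (A.mulVec (P j) + b) k) *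
             ((Aᵀ)⁻¹.mulVec (Q i) k - (Aᵀ)⁻¹.mulVec (Q j) k) = 0)) ∧
    ((∃ (S : Matrix (Fin d) (Fin d) ℝ) (c : Fin d → ℝ),
        Sᵀ = -S ∧ ∀ i, Q i = S.mulVec (P i) + c) ↔
      (∃ (S : Matrix (Fin d) (Fin d) ℝ) (c : Fin d → ℝ),
        Sᵀ = -S ∧ ∀ i, (Aᵀ)⁻¹.mulVec (Q i) = S.mulVec (A.mulVec (P i) + b) + c)) := by
  have hAT : IsUnit Aᵀ.det := by rwa [det_transpose]
  have key : ∀ i j : V,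
      (∑ k, ((A.mulVec (P i) + b) k - (A.mulVec (P j) + b) k) *
             ((Aᵀ)⁻¹.mulVec (Q i) k - (Aᵀ)⁻¹.mulVec (Q j) k)) =
      ∑ k, (P i k - P j k) * (Q i k - Q j k) := by
    intro i j
    have h1 : ∀ k, (A.mulVec (P i) + b) k - (A.mulVec (P j) + b) k
        = A.mulVec (P i - P j) k := by
      intro k
      simp [mulVec_sub, Pi.add_apply, Pi.sub_apply]
    have h2 : ∀ k, (Aᵀ)⁻¹.mulVec (Q i) k - (Aᵀ)⁻¹.mulVec (Q j) k
        = (Aᵀ)⁻¹.mulVec (Q i - Q j) k := by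
      intro k; simp [mulVec_sub, Pi.sub_apply]
    calc (∑ k, ((A.mulVec (P i) + b) k - (A.mulVec (P j) + b) k) *
             ((Aᵀ)⁻¹.mulVec (Q i) k - (Aᵀ)⁻¹.mulVec (Q j) k))
        = ∑ k, A.mulVec (P i - P j) k * (Aᵀ)⁻¹.mulVec (Q i - Q j) k := by
          refine Finset.sum_congr rfl fun k _ => ?_
          rw [h1 k, h2 k]
      _ = (A.mulVec (P i - P j)) ⬝ᵥ ((Aᵀ)⁻¹.mulVec (Q i - Q j)) := rfl
      _ = (P i - P j) ⬝ᵥ (Q i - Q j) := aux_dot A hA _ _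
      _ = ∑ k, (P i k - P j k) * (Q i k - Q j k) := rfl
  constructor
  · constructor
    · intro h i j hij; rw [key i j]; exact h i j hij
    · intro h i j hij; rw [← key i j]; exact h i j hij
  · constructor
    · rintro ⟨S, c, hS, hQ⟩
      refine ⟨(Aᵀ)⁻¹ * S * A⁻¹, (Aᵀ)⁻¹.mulVec c - ((Aᵀ)⁻¹ * S * A⁻¹).mulVec b, ?_, ?_⟩
      · have h1 : ((Aᵀ)⁻¹)ᵀ = A⁻¹ := by
          rw [← transpose_nonsing_inv, transpose_transpose]
        rw [transpose_mul, transpose_mul, hS, transpose_nonsing_inv, h1]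
        simp [Matrix.mul_assoc, Matrix.neg_mul, Matrix.mul_neg]
      · intro i
        rw [hQ i, mulVec_add, mulVec_add, mulVec_mulVec, ← mulVec_mulVec,
          mulVec_mulVec, mulVec_mulVec, Matrix.mul_assoc _ A⁻¹ A,
          nonsing_inv_mul _ hA, Matrix.mul_one]
        abel
    · rintro ⟨S, c, hS, hQ⟩
      refine ⟨Aᵀ * S * A, Aᵀ.mulVec (S.mulVec b) + Aᵀ.mulVec c, ?_, ?_⟩
      · rw [transpose_mul, transpose_mul, hS, transpose_transpose]
        simp [Matrix.mul_assoc, Matrix.neg_mul, Matrix.mul_neg]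
      · intro i
        have : Q i = Aᵀ.mulVec ((Aᵀ)⁻¹.mulVec (Q i)) := by
          rw [mulVec_mulVec, mul_nonsing_inv _ hAT, one_mulVec]
        rw [this, hQ i, mulVec_add, mulVec_add, mulVec_mulVec, mulVec_mulVec]
        rw [show (Aᵀ * S * A) *ᵥ P i = (Aᵀ * S) *ᵥ (A *ᵥ P i) by rw [mulVec_mulVec]]
        rw [mulVec_add, mulVec_mulVec]
        simp [mulVec_mulVec, Matrix.mul_assoc]
        abel
end

section
/- Affine invariance of static rigidity: let Φ(x) = Ax + b be an affine isomorphism of E^d. The map F = (f_i) ↦ (A f_i) carries equilibrium loads on P bijectively to equilibrium loads on Φ∘P, and resolvable loads bijectively to resolvable loads; in particular P is statically rigid iff Φ∘P is. -/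
open Matrix



section Aux

variable {V : Type*} [Fintype V] {d : ℕ}

private lemma aux_sum_mulVec (A : Matrix (Fin d) (Fin d) ℝ) (F : V → Fin d → ℝ) :
    ∑ i, A.mulVec (F i) = A.mulVec (∑ i, F i) := by
  simpa only [Matrix.mulVecLin_apply] using (map_sum (Matrix.mulVecLin A) F Finset.univ).symm

private lemma aux_inj (A : Matrix (Fin d) (Fin d) ℝ) (hA : IsUnit A.det) (x : Fin d → ℝ)
    (h : A.mulVec x = 0) : x = 0 := by
  have := congrArg (A⁻¹.mulVec) h
  simpa [Matrix.mulVec_mulVec, Matrix.nonsing_inv_mul A hA] using this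

private lemma aux_conj_entry (A M : Matrix (Fin d) (Fin d) ℝ) (k l : Fin d) :
    (A * M * Aᵀ) k l = ∑ p, ∑ q, A k p * A l q * M p q := by
  simp only [Matrix.mul_apply, Matrix.transpose_apply, Finset.sum_mul]
  rw [Finset.sum_comm]
  exact Finset.sum_congr rfl fun p _ => Finset.sum_congr rfl fun q _ => by ring

private lemma aux_conj_zero (A M : Matrix (Fin d) (Fin d) ℝ) (hA : IsUnit A.det)
    (h : A * M * Aᵀ = 0) : M = 0 := by
  have hAt : IsUnit Aᵀ.det := by rwa [Matrix.det_transpose]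
  have : A⁻¹ * (A * M * Aᵀ) * (Aᵀ)⁻¹ = M := by
    rw [show A * M * Aᵀ = A * (M * Aᵀ) from mul_assoc _ _ _, ← mul_assoc,
      Matrix.nonsing_inv_mul A hA, one_mul, mul_assoc,
      Matrix.mul_nonsing_inv _ hAt, mul_one]
  rw [← this, h, mul_zero, zero_mul]

private lemma aux_torque (A : Matrix (Fin d) (Fin d) ℝ) (b : Fin d → ℝ)
    (P F : V → Fin d → ℝ) (h0 : ∑ i, F i = 0) (k l : Fin d) :
    (∑ i, ((A.mulVec (P i) + b) k * (A.mulVec (F i)) l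
        - (A.mulVec (F i)) k * (A.mulVec (P i) + b) l))
      = (A * (Matrix.of fun p q => ∑ i, (P i p * F i q - F i p * P i q)) * Aᵀ) k l := by
  have hb : ∑ i, (A.mulVec (F i)) = 0 := by
    rw [aux_sum_mulVec, h0, Matrix.mulVec_zero]
  have hbk : ∀ m, (∑ i, (A.mulVec (F i)) m) = 0 := by
    intro m
    have := congrFun hb m
    simpa using this
  have prod_sum : ∀ (x y : Fin d → ℝ),
      (∑ p, ∑ q, A k p * A l q * (x p * y q)) = (∑ p, A k p * x p) * (∑ q, A l q * y q) := by
    intro x y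
    rw [Finset.sum_mul_sum]
    exact Finset.sum_congr rfl fun p _ => Finset.sum_congr rfl fun q _ => by ring
  have step : ∀ i, (A.mulVec (P i) + b) k * (A.mulVec (F i)) l
        - (A.mulVec (F i)) k * (A.mulVec (P i) + b) l
      = (∑ p, ∑ q, A k p * A l q * (P i p * F i q - F i p * P i q))
        + (b k * (A.mulVec (F i)) l - (A.mulVec (F i)) k * b l) := by
    intro i
    have e1 := prod_sum (P i) (F i)
    have e2 := prod_sum (F i) (P i)
    have esplit : (∑ p, ∑ q, A k p * A l q * (P i p * F i q - F i p * P i q))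
        = (∑ p, ∑ q, A k p * A l q * (P i p * F i q))
          - (∑ p, ∑ q, A k p * A l q * (F i p * P i q)) := by
      simp only [mul_sub, Finset.sum_sub_distrib]
    rw [esplit, e1, e2]
    simp only [Matrix.mulVec, dotProduct, Pi.add_apply]
    ring
  calc (∑ i, ((A.mulVec (P i) + b) k * (A.mulVec (F i)) l
        - (A.mulVec (F i)) k * (A.mulVec (P i) + b) l))
      = ∑ i, ((∑ p, ∑ q, A k p * A l q * (P i p * F i q - F i p * P i q))
          + (b k * (A.mulVec (F i)) l - (A.mulVec (F i)) k * b l)) :=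
        Finset.sum_congr rfl fun i _ => step i
    _ = (∑ i, ∑ p, ∑ q, A k p * A l q * (P i p * F i q - F i p * P i q))
          + (b k * (∑ i, (A.mulVec (F i)) l) - (∑ i, (A.mulVec (F i)) k) * b l) := by
        rw [Finset.sum_add_distrib, Finset.sum_sub_distrib, Finset.mul_sum, Finset.sum_mul]
    _ = ∑ i, ∑ p, ∑ q, A k p * A l q * (P i p * F i q - F i p * P i q) := by
        rw [hbk k, hbk l]; ring
    _ = ∑ p, ∑ q, ∑ i, A k p * A l q * (P i p * F i q - F i p * P i q) := by
        rw [Finset.sum_comm]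
        exact Finset.sum_congr rfl fun p _ => Finset.sum_comm
    _ = ∑ p, ∑ q, A k p * A l q * ∑ i, (P i p * F i q - F i p * P i q) := by
        exact Finset.sum_congr rfl fun p _ => Finset.sum_congr rfl fun q _ =>
          (Finset.mul_sum _ _ _).symm
    _ = (A * (Matrix.of fun p q => ∑ i, (P i p * F i q - F i p * P i q)) * Aᵀ) k l := by
        rw [aux_conj_entry]; rfl

end Aux

/-- `F` is an equilibrium load on the framework `P`: total force and total torque vanish. -/
def IsEquilibriumLoad {V : Type*} [Fintype V] {d : ℕ} (P F : V → Fin d → ℝ) : Prop :=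
  (∑ i, F i) = 0 ∧ ∀ k l, (∑ i, (P i k * F i l - F i k * P i l)) = 0

/-- `F` is resolvable on the framework `P` with edge set `Edge`. -/
def IsResolvableLoad {V : Type*} [Fintype V] {d : ℕ} (Edge : V → V → Prop)
    (P F : V → Fin d → ℝ) : Prop :=
  ∃ ω : V → V → ℝ, (∀ i j, ω i j = ω j i) ∧ (∀ i j, ¬ Edge i j → ω i j = 0) ∧
    ∀ i, F i + ∑ j, ω i j • (P j - P i) = 0

/-- affine invariance of static rigidity: for an affine isomorphism
`Φ(x) = Ax + b`, the map `F ↦ A∘F` carries equilibrium loads on `P` bijectively to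
equilibrium loads on `Φ∘P` and resolvable loads to resolvable loads; in particular
`P` is statically rigid iff `Φ∘P` is. -/
theorem affine_invariance_static {V : Type*} [Fintype V] {d : ℕ}
    (Edge : V → V → Prop)
    (P : V → Fin d → ℝ) (hP : ∀ i j, Edge i j → P i ≠ P j)
    (A : Matrix (Fin d) (Fin d) ℝ) (hA : IsUnit A.det) (b : Fin d → ℝ) :
    (∀ F : V → Fin d → ℝ, IsEquilibriumLoad P F ↔
      IsEquilibriumLoad (fun i => A.mulVec (P i) + b) (fun i => A.mulVec (F i))) ∧
    (∀ F : V → Fin d → ℝ, IsResolvableLoad Edge P F ↔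
      IsResolvableLoad Edge (fun i => A.mulVec (P i) + b) (fun i => A.mulVec (F i))) ∧
    ((∀ F, IsEquilibriumLoad P F → IsResolvableLoad Edge P F) ↔
      (∀ F, IsEquilibriumLoad (fun i => A.mulVec (P i) + b) F →
        IsResolvableLoad Edge (fun i => A.mulVec (P i) + b) F)) := by
  have hzero : ∀ F : V → Fin d → ℝ, (∑ i, F i) = 0 ↔ (∑ i, A.mulVec (F i)) = 0 := by
    intro F
    rw [aux_sum_mulVec]
    exact ⟨fun h => by rw [h, Matrix.mulVec_zero], fun h => aux_inj A hA _ h⟩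
  -- equilibrium equivalence
  have eq_iff : ∀ F : V → Fin d → ℝ, IsEquilibriumLoad P F ↔
      IsEquilibriumLoad (fun i => A.mulVec (P i) + b) (fun i => A.mulVec (F i)) := by
    intro F
    constructor
    · rintro ⟨h0, hT⟩
      refine ⟨(hzero F).mp h0, fun k l => ?_⟩
      have hM : (Matrix.of fun p q => ∑ i, (P i p * F i q - F i p * P i q)) = 0 := by
        ext p q
        exact hT p q
      have := aux_torque A b P F h0 k l
      rw [hM] at this
      simpa using this
    · rintro ⟨h0', hT'⟩
      have h0 : (∑ i, F i) = 0 := (hzero F).mpr h0'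
      have hM : A * (Matrix.of fun p q => ∑ i, (P i p * F i q - F i p * P i q)) * Aᵀ = 0 := by
        ext k l
        have := aux_torque A b P F h0 k l
        rw [← this]
        simpa using hT' k l
      have hM0 := aux_conj_zero A _ hA hM
      refine ⟨h0, fun k l => ?_⟩
      have := congrFun (congrFun hM0 k) l
      simpa using this
  -- resolvable equivalence
  have res_iff : ∀ F : V → Fin d → ℝ, IsResolvableLoad Edge P F ↔
      IsResolvableLoad Edge (fun i => A.mulVec (P i) + b) (fun i => A.mulVec (F i)) := by
    intro F
    have hres : ∀ (ω : V → V → ℝ) (i : V),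
        A.mulVec (F i) + ∑ j, ω i j • ((A.mulVec (P j) + b) - (A.mulVec (P i) + b))
          = A.mulVec (F i + ∑ j, ω i j • (P j - P i)) := by
      intro ω i
      rw [Matrix.mulVec_add, ← aux_sum_mulVec A (fun j => ω i j • (P j - P i))]
      congr 1
      refine Finset.sum_congr rfl fun j _ => ?_
      rw [Matrix.mulVec_smul, Matrix.mulVec_sub]
      congr 1
      abel
    constructor
    · rintro ⟨ω, hsym, hsupp, heq⟩
      refine ⟨ω, hsym, hsupp, fun i => ?_⟩
      show A.mulVec (F i) + ∑ j, ω i j • ((A.mulVec (P j) + b) - (A.mulVec (P i) + b)) = 0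
      rw [hres ω i, heq i, Matrix.mulVec_zero]
    · rintro ⟨ω, hsym, hsupp, heq⟩
      refine ⟨ω, hsym, hsupp, fun i => ?_⟩
      have h := heq i
      have h' : A.mulVec (F i + ∑ j, ω i j • (P j - P i)) = 0 := by
        rw [← hres ω i]
        exact h
      exact aux_inj A hA _ h'
  refine ⟨eq_iff, res_iff, ?_⟩
  constructor
  · intro h F hF
    set G : V → Fin d → ℝ := fun i => A⁻¹.mulVec (F i) with hGdef
    have hAG : (fun i => A.mulVec (G i)) = F := by
      funext i
      simp only [hGdef, Matrix.mulVec_mulVec, Matrix.mul_nonsing_inv A hA, Matrix.one_mulVec]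
    have hG : IsEquilibriumLoad P G := (eq_iff G).mpr (by rwa [hAG])
    have := (res_iff G).mp (h G hG)
    rwa [hAG] at this
  · intro h F hF
    exact (res_iff F).mpr (h _ ((eq_iff F).mp hF))
end

section
/- Projective invariance of static rigidity: let M ∈ GL(ℝ^{d+1}) induce a projective map Φ that maps no vertex of the framework P ⊂ E^d to infinity. Then the induced map M_*: Λ²ℝ^{d+1} → Λ²ℝ^{d+1} carries equilibrium loads on P (written as bivector loads g_i = p_i ∧ f_i) bijectively to equilibrium loads on Φ∘P, and resolvable loads to resolvable loads. Consequently P is statically rigid iff Φ∘P is statically rigid. -/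
set_option synthInstance.maxHeartbeats 400000

open ExteriorAlgebra

/-- The bivector `x ∧ y` in the exterior algebra. -/
noncomputable def wedge {n : ℕ} (x y : Fin n → ℝ) : ExteriorAlgebra ℝ (Fin n → ℝ) :=
  ι ℝ x * ι ℝ y

/-- `g` is a force applied at the projective point `[x]`: a decomposable bivector
divisible by `x`. -/
def IsForceAt {n : ℕ} (x : Fin n → ℝ) (g : ExteriorAlgebra ℝ (Fin n → ℝ)) : Prop :=
  ∃ y, g = wedge x y

/-- Equilibrium load on a projective framework: a force at each vertex, summing to zero. -/
def ProjEquilibriumLoad {V : Type*} [Fintype V] {n : ℕ} (X : V → Fin n → ℝ)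
    (G : V → ExteriorAlgebra ℝ (Fin n → ℝ)) : Prop :=
  (∀ i, IsForceAt (X i) (G i)) ∧ ∑ i, G i = 0

/-- Resolvable load on a projective framework: resolved by a stress assigning to
each edge `ij` a bivector in `Λ²span{x_i, x_j}` (i.e. a multiple `c_{ij} x_i ∧ x_j`,
with `w_{ij} = −w_{ji}` amounting to symmetry of the scalars). -/
def ProjResolvableLoad {V : Type*} [Fintype V] {n : ℕ} (Edge : V → V → Prop)
    (X : V → Fin n → ℝ) (G : V → ExteriorAlgebra ℝ (Fin n → ℝ)) : Prop :=
  ∃ c : V → V → ℝ, (∀ i j, c i j = c j i) ∧ (∀ i j, ¬ Edge i j → c i j = 0) ∧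
    ∀ i, G i = ∑ j, c i j • wedge (X i) (X j)

/-- Static rigidity of a projective framework. -/
def ProjStaticallyRigid {V : Type*} [Fintype V] {n : ℕ} (Edge : V → V → Prop)
    (X : V → Fin n → ℝ) : Prop :=
  ∀ G, ProjEquilibriumLoad X G → ProjResolvableLoad Edge X G

lemma wedge_smul_left {n : ℕ} (a : ℝ) (x y : Fin n → ℝ) :
    wedge (a • x) y = a • wedge x y := by
  simp [wedge, map_smul, smul_mul_assoc]

lemma wedge_smul_right {n : ℕ} (a : ℝ) (x y : Fin n → ℝ) :
    wedge x (a • y) = a • wedge x y := by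
  simp [wedge, map_smul, mul_smul_comm]

lemma map_wedge {n : ℕ} (f : (Fin n → ℝ) →ₗ[ℝ] (Fin n → ℝ)) (x y : Fin n → ℝ) :
    ExteriorAlgebra.map f (wedge x y) = wedge (f x) (f y) := by
  simp [wedge, map_mul, map_apply_ι]

/-- projective invariance of static rigidity: if `M ∈ GL(ℝ^{d+1})`
induces a projective map sending no vertex of `P ⊂ E^d` to infinity, then
`M_* : Λ²ℝ^{d+1} → Λ²ℝ^{d+1}` carries equilibrium loads on `P` bijectively to
equilibrium loads on `Φ∘P` and resolvable loads to resolvable ones; consequently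
`P` is statically rigid iff `Φ∘P` is. -/
theorem projective_invariance_static {V : Type*} [Fintype V] {d : ℕ}
    (Edge : V → V → Prop)
    (M : Matrix (Fin (d+1)) (Fin (d+1)) ℝ) (hM : IsUnit M.det)
    (P : V → Fin d → ℝ) (hP : ∀ i j, Edge i j → P i ≠ P j)
    (X : V → Fin (d+1) → ℝ) (hX : ∀ i, X i = Fin.cons 1 (P i))
    (hfin : ∀ i, M.mulVec (X i) 0 ≠ 0)
    (X' : V → Fin (d+1) → ℝ)
    (hX' : ∀ i, X' i = (M.mulVec (X i) 0)⁻¹ • M.mulVec (X i)) :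
    (∀ G, ProjEquilibriumLoad X G ↔
      ProjEquilibriumLoad X' (fun i => ExteriorAlgebra.map (Matrix.mulVecLin M) (G i))) ∧
    (∀ G, ProjResolvableLoad Edge X G ↔
      ProjResolvableLoad Edge X' (fun i => ExteriorAlgebra.map (Matrix.mulVecLin M) (G i))) ∧
    (ProjStaticallyRigid Edge X ↔ ProjStaticallyRigid Edge X') := by
  set t : V → ℝ := fun i => M.mulVec (X i) 0 with ht
  set A := ExteriorAlgebra.map (R := ℝ) (Matrix.mulVecLin M) with hA
  set B := ExteriorAlgebra.map (R := ℝ) (Matrix.mulVecLin M⁻¹) with hB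
  have hMM : M⁻¹ * M = 1 := Matrix.nonsing_inv_mul M hM
  have hMM' : M * M⁻¹ = 1 := Matrix.mul_nonsing_inv M hM
  have hBA : ∀ z, B (A z) = z := by
    intro z
    have h1 : (AlgHom.comp B A) z = z := by
      rw [hA, hB, ExteriorAlgebra.map_comp_map, ← Matrix.mulVecLin_mul, hMM,
        Matrix.mulVecLin_one, ExteriorAlgebra.map_id]
      rfl
    exact h1
  have hAB : ∀ z, A (B z) = z := by
    intro z
    have h1 : (AlgHom.comp A B) z = z := by
      rw [hA, hB, ExteriorAlgebra.map_comp_map, ← Matrix.mulVecLin_mul, hMM',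
        Matrix.mulVecLin_one, ExteriorAlgebra.map_id]
      rfl
    exact h1
  have hAinj : Function.Injective A := fun a b h => by
    have := congrArg B h; simpa [hBA] using this
  -- M.mulVec (X i) = t i • X' i
  have hMX : ∀ i, M.mulVec (X i) = t i • X' i := by
    intro i
    rw [hX' i, smul_smul, mul_inv_cancel₀ (hfin i), one_smul]
  -- M⁻¹.mulVec (X' i) = (t i)⁻¹ • X i
  have hMinvX' : ∀ i, M⁻¹.mulVec (X' i) = (t i)⁻¹ • X i := by
    intro i
    rw [hX' i, Matrix.mulVec_smul, Matrix.mulVec_mulVec, hMM, Matrix.one_mulVec]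
  -- A of wedge of X's
  have hAwedge : ∀ i j, A (wedge (X i) (X j)) = (t i * t j) • wedge (X' i) (X' j) := by
    intro i j
    rw [hA, map_wedge, Matrix.mulVecLin_apply, Matrix.mulVecLin_apply, hMX, hMX,
      wedge_smul_left, wedge_smul_right, smul_smul]
  -- equilibrium iff
  have eqIff : ∀ G, ProjEquilibriumLoad X G ↔
      ProjEquilibriumLoad X' (fun i => A (G i)) := by
    intro G
    constructor
    · rintro ⟨hforce, hsum⟩
      constructor
      · intro i
        obtain ⟨y, hy⟩ := hforce i
        refine ⟨t i • M.mulVec y, ?_⟩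
        dsimp only
        rw [hy, hA, map_wedge, Matrix.mulVecLin_apply, Matrix.mulVecLin_apply, hMX,
          wedge_smul_left, wedge_smul_right]
      · rw [← map_sum, hsum, map_zero]
    · rintro ⟨hforce, hsum⟩
      constructor
      · intro i
        obtain ⟨y, hy⟩ := hforce i
        refine ⟨(t i)⁻¹ • M⁻¹.mulVec y, ?_⟩
        have : G i = B (wedge (X' i) y) := by rw [← hy, hBA]
        rw [this, hB, map_wedge, Matrix.mulVecLin_apply, Matrix.mulVecLin_apply, hMinvX',
          wedge_smul_left, wedge_smul_right]
      · have : A (∑ i, G i) = 0 := by rw [map_sum]; exact hsum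
        have := congrArg B this
        simpa [hBA] using this
  have resIff : ∀ G, ProjResolvableLoad Edge X G ↔
      ProjResolvableLoad Edge X' (fun i => A (G i)) := by
    intro G
    constructor
    · rintro ⟨c, hsymm, hedge, hres⟩
      refine ⟨fun i j => t i * t j * c i j, fun i j => by dsimp only; rw [hsymm i j]; ring,
        fun i j h => by dsimp only; rw [hedge i j h, mul_zero], fun i => ?_⟩
      dsimp only
      rw [hres i, map_sum]
      refine Finset.sum_congr rfl fun j _ => ?_
      rw [map_smul, hAwedge, smul_smul, mul_comm (c i j)]
    · rintro ⟨c, hsymm, hedge, hres⟩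
      refine ⟨fun i j => (t i)⁻¹ * (t j)⁻¹ * c i j, fun i j => by dsimp only; rw [hsymm i j]; ring,
        fun i j h => by dsimp only; rw [hedge i j h, mul_zero], fun i => ?_⟩
      dsimp only at hres
      apply hAinj
      rw [hres i, map_sum]
      refine Finset.sum_congr rfl fun j _ => ?_
      rw [map_smul, hAwedge, smul_smul]
      congr 1
      field_simp [show t i ≠ 0 from hfin i, show t j ≠ 0 from hfin j]
  refine ⟨eqIff, resIff, ?_⟩
  constructor
  · intro hrig G' hG'
    have hG'eq : (fun i => A (B (G' i))) = G' := funext fun i => hAB (G' i)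
    have h1 : ProjEquilibriumLoad X (fun i => B (G' i)) := by
      rw [eqIff]; rw [hG'eq]; exact hG'
    have h2 := hrig _ h1
    have := (resIff _).mp h2
    rwa [hG'eq] at this
  · intro hrig G hG
    have h1 := (eqIff G).mp hG
    have h2 := hrig _ h1
    exact (resIff G).mpr h2
end

section
/- Darboux–Sauer correspondence (kinematic form): let Φ be a projective transformation of ℝP^d mapping no vertex of the framework P to infinity, with L the hyperplane sent to infinity and dΦ_p the differential of Φ at p. Then the velocity field Q = (q_i) is an infinitesimal motion of P if and only if the velocity field (h_L(p_i)^{-2} · ((dΦ_{p_i})^{-1})^*(q_i)) is an infinitesimal motion of Φ∘P, where h_L is the signed distance to L and * denotes the adjoint with respect to the Euclidean inner product. -/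
open Matrix

noncomputable def dsT {d : ℕ} (M : Matrix (Fin (d+1)) (Fin (d+1)) ℝ) :
    (Fin d → ℝ) →L[ℝ] (Fin (d+1) → ℝ) :=
  LinearMap.toContinuousLinearMap
  { toFun := fun v => M.mulVec (Fin.cons 0 v)
    map_add' := fun v w => by
      have h : (Fin.cons (0:ℝ) (v + w) : Fin (d+1) → ℝ)
          = (Fin.cons 0 v : Fin (d+1) → ℝ) + (Fin.cons 0 w : Fin (d+1) → ℝ) := by
        funext α; refine Fin.cases ?_ ?_ α <;> simp
      show M.mulVec (Fin.cons 0 (v + w)) = _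
      rw [h, Matrix.mulVec_add]
    map_smul' := fun c v => by
      have h : (Fin.cons (0:ℝ) (c • v) : Fin (d+1) → ℝ)
          = c • (Fin.cons (0:ℝ) v : Fin (d+1) → ℝ) := by
        funext α; refine Fin.cases ?_ ?_ α <;> simp
      show M.mulVec (Fin.cons 0 (c • v)) = _
      rw [h, Matrix.mulVec_smul]; rfl }

lemma dsT_apply {d : ℕ} (M : Matrix (Fin (d+1)) (Fin (d+1)) ℝ) (v : Fin d → ℝ) :
    dsT M v = M.mulVec (Fin.cons 0 v) := rfl

noncomputable def dsL {d : ℕ} (M : Matrix (Fin (d+1)) (Fin (d+1)) ℝ) (p : Fin d → ℝ) :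
    (Fin d → ℝ) →L[ℝ] (Fin d → ℝ) :=
  ContinuousLinearMap.pi fun k =>
    M.mulVec (Fin.cons 1 p) k.succ •
        ((-(M.mulVec (Fin.cons 1 p) 0 ^ 2)⁻¹) •
          ((ContinuousLinearMap.proj (0 : Fin (d+1))).comp (dsT M)))
      + (M.mulVec (Fin.cons 1 p) 0)⁻¹ •
          ((ContinuousLinearMap.proj (k.succ : Fin (d+1))).comp (dsT M))

lemma dsL_apply {d : ℕ} (M : Matrix (Fin (d+1)) (Fin (d+1)) ℝ) (p v : Fin d → ℝ) (k : Fin d) :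
    dsL M p v k =
      M.mulVec (Fin.cons 1 p) k.succ *
          (-(M.mulVec (Fin.cons 1 p) 0 ^ 2)⁻¹ * M.mulVec (Fin.cons 0 v) 0)
        + (M.mulVec (Fin.cons 1 p) 0)⁻¹ * M.mulVec (Fin.cons 0 v) k.succ := by
  simp [dsL, dsT_apply, smul_eq_mul, mul_assoc]

lemma dsHasFDerivAt {d : ℕ} (M : Matrix (Fin (d+1)) (Fin (d+1)) ℝ) (p : Fin d → ℝ)
    (hb : M.mulVec (Fin.cons 1 p) 0 ≠ 0)
    (Φ : (Fin d → ℝ) → (Fin d → ℝ))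
    (hΦ : ∀ q, Φ q = fun k : Fin d =>
      M.mulVec (Fin.cons 1 q) k.succ / M.mulVec (Fin.cons 1 q) 0) :
    HasFDerivAt Φ (dsL M p) p := by
  rw [hasFDerivAt_pi']
  intro k
  rw [dsL, ContinuousLinearMap.proj_pi]
  have hg : ∀ (α : Fin (d+1)), HasFDerivAt (fun q : Fin d → ℝ => M.mulVec (Fin.cons 1 q) α)
      ((ContinuousLinearMap.proj α).comp (dsT M)) p := by
    intro α
    have key : (fun q : Fin d → ℝ => M.mulVec (Fin.cons 1 q) α)
        = fun q => M.mulVec (Fin.cons 1 (0 : Fin d → ℝ)) α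
            + ((ContinuousLinearMap.proj α).comp (dsT M)) q := by
      funext q
      have h : (Fin.cons (1:ℝ) q : Fin (d+1) → ℝ)
          = (Fin.cons (1:ℝ) (0 : Fin d → ℝ) : Fin (d+1) → ℝ)
            + (Fin.cons (0:ℝ) q : Fin (d+1) → ℝ) := by
        funext β; refine Fin.cases ?_ ?_ β <;> simp
      rw [h, Matrix.mulVec_add]
      simp [dsT_apply]
    rw [key]
    simpa using (((ContinuousLinearMap.proj α).comp (dsT M)).hasFDerivAt (x := p)).const_add
      (M.mulVec (Fin.cons 1 (0 : Fin d → ℝ)) α)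
  have hmain := (hg k.succ).mul ((hasDerivAt_inv hb).comp_hasFDerivAt p (hg 0))
  have hfun : (fun x => Φ x k) = fun q : Fin d → ℝ =>
      M.mulVec (Fin.cons 1 q) k.succ * (M.mulVec (Fin.cons 1 q) 0)⁻¹ := by
    funext q; rw [hΦ q]; simp [div_eq_mul_inv]
  rw [hfun]
  exact hmain

/-- Darboux–Sauer correspondence, kinematic form: let the projective
map `Φ` be induced by `M ∈ GL(ℝ^{d+1})`, mapping no vertex of `P` to infinity, with
`h_L(p) = (M(1,p))⁰` the (rescaled) signed distance to the hyperplane sent to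
infinity. If `Q'` is the velocity field determined by
`⟨q'_i, dΦ_{p_i}(v)⟩ = h_L(p_i)⁻² ⟨q_i, v⟩` for all `v` (i.e.
`q'_i = h_L(p_i)⁻² ((dΦ_{p_i})⁻¹)* q_i`), then `Q` is an infinitesimal motion of
`P` iff `Q'` is an infinitesimal motion of `Φ∘P`. -/
theorem darboux_sauer_kinematic {V : Type*} [Fintype V] {d : ℕ}
    (Edge : V → V → Prop)
    (M : Matrix (Fin (d+1)) (Fin (d+1)) ℝ) (hM : IsUnit M.det)
    (P : V → Fin d → ℝ) (hP : ∀ i j, Edge i j → P i ≠ P j)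
    (hfin : ∀ i, M.mulVec (Fin.cons 1 (P i)) 0 ≠ 0)
    (Φ : (Fin d → ℝ) → (Fin d → ℝ))
    (hΦ : ∀ p, Φ p = fun k : Fin d =>
      M.mulVec (Fin.cons 1 p) k.succ / M.mulVec (Fin.cons 1 p) 0)
    (hdiff : ∀ i, DifferentiableAt ℝ Φ (P i))
    (Q Q' : V → Fin d → ℝ)
    (hQ' : ∀ i (v : Fin d → ℝ),
      (∑ k, Q' i k * fderiv ℝ Φ (P i) v k) =
        (M.mulVec (Fin.cons 1 (P i)) 0) ^ (-2 : ℤ) * ∑ k, Q i k * v k) :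
    (∀ i j, Edge i j → ∑ k, (P i k - P j k) * (Q i k - Q j k) = 0) ↔
    (∀ i j, Edge i j → ∑ k, (Φ (P i) k - Φ (P j) k) * (Q' i k - Q' j k) = 0) := by
  classical
  have hfd : ∀ i, fderiv ℝ Φ (P i) = dsL M (P i) := fun i =>
    (dsHasFDerivAt M (P i) (hfin i) Φ hΦ).fderiv
  set N := (Mᵀ)⁻¹ with hNdef
  have hMdetT : IsUnit (Mᵀ).det := by simpa using hM
  have hMN : Mᵀ * N = 1 := Matrix.mul_nonsing_inv _ hMdetT
  have key : ∀ (x y : Fin (d+1) → ℝ), N.mulVec y ⬝ᵥ M.mulVec x = y ⬝ᵥ x := by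
    intro x y
    rw [Matrix.dotProduct_mulVec, ← Matrix.mulVec_transpose, Matrix.mulVec_mulVec, hMN,
      Matrix.one_mulVec]
  -- the lifted covectors
  set ω : V → (Fin (d+1) → ℝ) :=
    fun i => (Fin.cons (-(∑ k, P i k * Q i k)) (Q i) : Fin (d+1) → ℝ) with hωdef
  set u : V → (Fin (d+1) → ℝ) :=
    fun i => (M.mulVec (Fin.cons 1 (P i)) 0)⁻¹ • N.mulVec (ω i) with hudef
  -- basic dot product expansions
  have hconsdot : ∀ (x0 y0 : ℝ) (x y : Fin d → ℝ),
      (Fin.cons x0 x : Fin (d+1) → ℝ) ⬝ᵥ (Fin.cons y0 y : Fin (d+1) → ℝ)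
        = x0 * y0 + ∑ k, x k * y k := by
    intro x0 y0 x y
    rw [dotProduct, Fin.sum_univ_succ]
    simp
  have hsplit : ∀ (x y : Fin (d+1) → ℝ),
      ∑ k : Fin d, x k.succ * y k.succ = x ⬝ᵥ y - x 0 * y 0 := by
    intro x y; rw [dotProduct, Fin.sum_univ_succ]; ring
  have hωp : ∀ i j, ω j ⬝ᵥ (Fin.cons 1 (P i) : Fin (d+1) → ℝ)
      = -(∑ k, P j k * Q j k) + ∑ k, Q j k * P i k := by
    intro i j; rw [hωdef]; rw [hconsdot]; ring
  have huM : ∀ j (x : Fin (d+1) → ℝ),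
      u j ⬝ᵥ M.mulVec x = (M.mulVec (Fin.cons 1 (P j)) 0)⁻¹ * (ω j ⬝ᵥ x) := by
    intro j x
    rw [hudef]
    rw [smul_dotProduct, key, smul_eq_mul]
  have hωv : ∀ j (v : Fin d → ℝ),
      ω j ⬝ᵥ (Fin.cons 0 v : Fin (d+1) → ℝ) = ∑ k, Q j k * v k := by
    intro j v; rw [hωdef]; rw [hconsdot]; ring
  have hua : ∀ j, u j ⬝ᵥ M.mulVec (Fin.cons 1 (P j)) = 0 := by
    intro j
    rw [huM, hωp]
    simp [mul_comm]
  -- Fact C: the candidate velocity satisfies the defining equation of Q'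
  have hC : ∀ i (v : Fin d → ℝ),
      ∑ k, u i k.succ * dsL M (P i) v k
        = (M.mulVec (Fin.cons 1 (P i)) 0) ^ (-2 : ℤ) * ∑ k, Q i k * v k := by
    intro i v
    have hbne : M.mulVec (Fin.cons 1 (P i)) 0 ≠ 0 := hfin i
    have e1 : ∑ k, u i k.succ * dsL M (P i) v k
        = (-(M.mulVec (Fin.cons 1 (P i)) 0 ^ 2)⁻¹ * M.mulVec (Fin.cons 0 v) 0)
            * (∑ k : Fin d, u i k.succ * M.mulVec (Fin.cons 1 (P i)) k.succ)
          + (M.mulVec (Fin.cons 1 (P i)) 0)⁻¹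
            * (∑ k : Fin d, u i k.succ * M.mulVec (Fin.cons 0 v) k.succ) := by
      rw [Finset.mul_sum, Finset.mul_sum, ← Finset.sum_add_distrib]
      refine Finset.sum_congr rfl fun k _ => ?_
      rw [dsL_apply]; ring
    have e2 : ∑ k : Fin d, u i k.succ * M.mulVec (Fin.cons 1 (P i)) k.succ
        = -(u i 0 * M.mulVec (Fin.cons 1 (P i)) 0) := by
      rw [hsplit, hua]; ring
    have e3 : ∑ k : Fin d, u i k.succ * M.mulVec (Fin.cons 0 v) k.succ
        = (M.mulVec (Fin.cons 1 (P i)) 0)⁻¹ * (∑ k, Q i k * v k)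
          - u i 0 * M.mulVec (Fin.cons 0 v) 0 := by
      rw [hsplit, huM, hωv]
    rw [e1, e2, e3]
    have hz2 : (M.mulVec (Fin.cons 1 (P i)) 0) ^ (-2 : ℤ)
        = ((M.mulVec (Fin.cons 1 (P i)) 0) ^ 2)⁻¹ := by
      rw [_root_.zpow_neg]; norm_cast
    rw [hz2]
    field_simp
    ring
  -- Fact D: Q' is forced to be the tail of u
  have hD : ∀ i (k : Fin d), Q' i k = u i k.succ := by
    intro i
    have hbne : M.mulVec (Fin.cons 1 (P i)) 0 ≠ 0 := hfin i
    have hr : ∀ v : Fin d → ℝ,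
        ∑ k : Fin d, (Q' i k - u i k.succ) * dsL M (P i) v k = 0 := by
      intro v
      have h1 := hQ' i v
      rw [hfd i] at h1
      have h2 := hC i v
      have : ∑ k : Fin d, (Q' i k - u i k.succ) * dsL M (P i) v k
          = (∑ k : Fin d, Q' i k * dsL M (P i) v k)
            - ∑ k : Fin d, u i k.succ * dsL M (P i) v k := by
        rw [← Finset.sum_sub_distrib]
        exact Finset.sum_congr rfl fun k _ => by ring
      rw [this, h1, h2, sub_self]
    set r : Fin d → ℝ := fun k => Q' i k - u i k.succ with hrdef
    set z : Fin (d+1) → ℝ :=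
      (Fin.cons (-(∑ k : Fin d, r k * M.mulVec (Fin.cons 1 (P i)) k.succ))
        (fun k => M.mulVec (Fin.cons 1 (P i)) 0 * r k) : Fin (d+1) → ℝ) with hzdef
    have hzv : ∀ v : Fin d → ℝ, z ⬝ᵥ M.mulVec (Fin.cons 0 v) = 0 := by
      intro v
      have h0 := hr v
      have hterm : ∀ k : Fin d,
          (M.mulVec (Fin.cons 1 (P i)) 0)^2 * (r k * dsL M (P i) v k)
            = M.mulVec (Fin.cons 1 (P i)) 0 * r k * M.mulVec (Fin.cons 0 v) k.succ
              - r k * M.mulVec (Fin.cons 1 (P i)) k.succ * M.mulVec (Fin.cons 0 v) 0 := by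
        intro k
        rw [dsL_apply]
        field_simp
        ring
      have hsum : z ⬝ᵥ M.mulVec (Fin.cons 0 v)
          = ∑ k : Fin d, (M.mulVec (Fin.cons 1 (P i)) 0)^2 * (r k * dsL M (P i) v k) := by
        rw [dotProduct, Fin.sum_univ_succ]
        simp only [hzdef, Fin.cons_zero, Fin.cons_succ]
        rw [Finset.sum_congr rfl fun k _ => hterm k, Finset.sum_sub_distrib,
          ← Finset.sum_mul]
        ring
      rw [hsum, ← Finset.mul_sum, h0, mul_zero]
    have hza : z ⬝ᵥ M.mulVec (Fin.cons 1 (P i)) = 0 := by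
      rw [dotProduct, Fin.sum_univ_succ]
      simp only [hzdef, Fin.cons_zero, Fin.cons_succ]
      rw [Finset.sum_congr rfl (fun (k : Fin d) _ =>
        show M.mulVec (Fin.cons 1 (P i)) 0 * r k * M.mulVec (Fin.cons 1 (P i)) k.succ
          = M.mulVec (Fin.cons 1 (P i)) 0 * (r k * M.mulVec (Fin.cons 1 (P i)) k.succ) by ring),
        ← Finset.mul_sum]
      ring
    have hzall : ∀ y : Fin (d+1) → ℝ, z ⬝ᵥ y = 0 := by
      intro y
      have hx : M.mulVec (M⁻¹.mulVec y) = y := by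
        rw [Matrix.mulVec_mulVec, Matrix.mul_nonsing_inv _ hM, Matrix.one_mulVec]
      have hdec : M⁻¹.mulVec y
          = M⁻¹.mulVec y 0 • (Fin.cons 1 (P i) : Fin (d+1) → ℝ)
            + (Fin.cons 0 (fun k => M⁻¹.mulVec y k.succ - M⁻¹.mulVec y 0 * P i k)
                : Fin (d+1) → ℝ) := by
        funext α
        refine Fin.cases ?_ ?_ α
        · simp
        · intro k; simp
      calc z ⬝ᵥ y = z ⬝ᵥ M.mulVec (M⁻¹.mulVec y) := by rw [hx]
        _ = 0 := by
            rw [hdec, Matrix.mulVec_add, Matrix.mulVec_smul, dotProduct_add,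
              dotProduct_smul, hza, hzv, smul_zero, add_zero]
    have hz0 : ∀ α, z α = 0 := by
      intro α
      have := hzall (Pi.single α 1)
      rwa [dotProduct_single, mul_one] at this
    intro k
    have hk := hz0 k.succ
    simp only [hzdef, Fin.cons_succ] at hk
    have := (mul_eq_zero.mp hk).resolve_left hbne
    have : r k = 0 := this
    rw [hrdef] at this
    have : Q' i k - u i k.succ = 0 := this
    linarith
  -- cross terms
  have hΦk : ∀ i (k : Fin d), Φ (P i) k
      = M.mulVec (Fin.cons 1 (P i)) k.succ * (M.mulVec (Fin.cons 1 (P i)) 0)⁻¹ := by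
    intro i k; rw [hΦ (P i)]; simp [div_eq_mul_inv]
  have hcross : ∀ i j, ∑ k : Fin d, Φ (P i) k * u j k.succ
      = (M.mulVec (Fin.cons 1 (P i)) 0)⁻¹ *
          ((M.mulVec (Fin.cons 1 (P j)) 0)⁻¹
            * (ω j ⬝ᵥ (Fin.cons 1 (P i) : Fin (d+1) → ℝ)))
        - u j 0 := by
    intro i j
    have hbne : M.mulVec (Fin.cons 1 (P i)) 0 ≠ 0 := hfin i
    have e1 : ∑ k : Fin d, Φ (P i) k * u j k.succ
        = (M.mulVec (Fin.cons 1 (P i)) 0)⁻¹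
            * ∑ k : Fin d, M.mulVec (Fin.cons 1 (P i)) k.succ * u j k.succ := by
      rw [Finset.mul_sum]
      refine Finset.sum_congr rfl fun k _ => ?_
      rw [hΦk]; ring
    have e2 : ∑ k : Fin d, M.mulVec (Fin.cons 1 (P i)) k.succ * u j k.succ
        = (M.mulVec (Fin.cons 1 (P j)) 0)⁻¹
            * (ω j ⬝ᵥ (Fin.cons 1 (P i) : Fin (d+1) → ℝ))
          - M.mulVec (Fin.cons 1 (P i)) 0 * u j 0 := by
      rw [hsplit]
      have : M.mulVec (Fin.cons 1 (P i)) ⬝ᵥ u j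
          = (M.mulVec (Fin.cons 1 (P j)) 0)⁻¹
            * (ω j ⬝ᵥ (Fin.cons 1 (P i) : Fin (d+1) → ℝ)) := by
        rw [dotProduct_comm, huM]
      rw [this]
    rw [e1, e2]
    have hbnej : M.mulVec (Fin.cons 1 (P j)) 0 ≠ 0 := hfin j
    field_simp
  -- the main edge identity
  have hE : ∀ i j, ∑ k : Fin d, (Φ (P i) k - Φ (P j) k) * (Q' i k - Q' j k)
      = ((M.mulVec (Fin.cons 1 (P i)) 0) * (M.mulVec (Fin.cons 1 (P j)) 0))⁻¹
          * ∑ k : Fin d, (P i k - P j k) * (Q i k - Q j k) := by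
    intro i j
    have e0 : ∑ k : Fin d, (Φ (P i) k - Φ (P j) k) * (Q' i k - Q' j k)
        = (∑ k : Fin d, Φ (P i) k * u i k.succ) - (∑ k : Fin d, Φ (P i) k * u j k.succ)
          - (∑ k : Fin d, Φ (P j) k * u i k.succ) + (∑ k : Fin d, Φ (P j) k * u j k.succ) := by
      rw [← Finset.sum_sub_distrib, ← Finset.sum_sub_distrib, ← Finset.sum_add_distrib]
      refine Finset.sum_congr rfl fun k _ => ?_
      rw [hD i k, hD j k]; ring
    rw [e0, hcross i i, hcross i j, hcross j i, hcross j j, hωp, hωp, hωp, hωp]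
    have hexp : ∑ k : Fin d, (P i k - P j k) * (Q i k - Q j k)
        = (∑ k : Fin d, P i k * Q i k) - (∑ k : Fin d, Q j k * P i k)
          - (∑ k : Fin d, Q i k * P j k) + (∑ k : Fin d, P j k * Q j k) := by
      rw [← Finset.sum_sub_distrib, ← Finset.sum_sub_distrib, ← Finset.sum_add_distrib]
      refine Finset.sum_congr rfl fun k _ => ?_
      ring
    rw [hexp, mul_inv]
    have hQP : ∀ i' j' : V, ∑ k : Fin d, Q i' k * P j' k = ∑ k : Fin d, P j' k * Q i' k :=
      fun i' j' => Finset.sum_congr rfl fun k _ => by ring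
    rw [hQP i i, hQP j j]
    ring
  constructor
  · intro h i j hij
    rw [hE i j, h i j hij, mul_zero]
  · intro h i j hij
    have hthis := hE i j
    rw [h i j hij] at hthis
    have hne : ((M.mulVec (Fin.cons 1 (P i)) 0) * (M.mulVec (Fin.cons 1 (P j)) 0))⁻¹ ≠ 0 :=
      inv_ne_zero (mul_ne_zero (hfin i) (hfin j))
    exact (mul_eq_zero.mp hthis.symm).resolve_left hne
end

section
/- Euclidean–projective kinematic correspondence: let P be a framework in E^d ⊂ ℝ^{d+1}. Given a velocity field Q = (q_i), define τ_i ∈ (Λ²ℝ^{d+1})*/Λ²(p_i^⊥) by ⟨p_i ∧ y, τ_i⟩ = ⟨y, q_i⟩ for all y ∈ ℝ^d. Then Q is a Euclidean infinitesimal motion of P (⟨p_i − p_j, q_i − q_j⟩ = 0 for edges) if and only if ⟨p_i ∧ p_j, τ_i − τ_j⟩ = 0 for all edges ij. -/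
set_option synthInstance.maxHeartbeats 400000

open ExteriorAlgebra

/-- Euclidean–projective kinematic correspondence: let `P` be a
framework in `E^d ⊂ ℝ^{d+1}` and `Q` a velocity field. Choose for each vertex a
functional `τ_i` on `Λ²ℝ^{d+1}` (a representative of the projective velocity in
`(Λ²ℝ^{d+1})*/Λ²(p_i^⊥)`) with `⟨p_i ∧ y, τ_i⟩ = ⟨y, q_i⟩` for all `y ∈ ℝ^d`.
Then `Q` is a Euclidean infinitesimal motion iff
`⟨p_i ∧ p_j, τ_i − τ_j⟩ = 0` for all edges. -/
theorem euclidean_projective_kinematic {V : Type*} [Fintype V] {d : ℕ}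
    (Edge : V → V → Prop)
    (P : V → Fin d → ℝ) (hP : ∀ i j, Edge i j → P i ≠ P j)
    (Q : V → Fin d → ℝ)
    (τ : V → (ExteriorAlgebra ℝ (Fin (d+1) → ℝ) →ₗ[ℝ] ℝ))
    (hτ : ∀ i (y : Fin (d+1) → ℝ), y 0 = 0 →
      τ i (ι ℝ (Fin.cons 1 (P i) : Fin (d+1) → ℝ) * ι ℝ y) = ∑ k, y k.succ * Q i k) :
    (∀ i j, Edge i j → ∑ k, (P i k - P j k) * (Q i k - Q j k) = 0) ↔
    (∀ i j, Edge i j →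
      (τ i - τ j) (ι ℝ (Fin.cons 1 (P i) : Fin (d+1) → ℝ) *
                   ι ℝ (Fin.cons 1 (P j) : Fin (d+1) → ℝ)) = 0) := by
  have key : ∀ i j,
      (τ i - τ j) (ι ℝ (Fin.cons 1 (P i) : Fin (d+1) → ℝ) *
                   ι ℝ (Fin.cons 1 (P j) : Fin (d+1) → ℝ)) =
      - ∑ k, (P i k - P j k) * (Q i k - Q j k) := by
    intro i j
    set pi : Fin (d+1) → ℝ := Fin.cons 1 (P i)
    set pj : Fin (d+1) → ℝ := Fin.cons 1 (P j)
    have hy0 : (pj - pi) 0 = 0 := by simp [pi, pj]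
    have hy0' : (pi - pj) 0 = 0 := by simp [pi, pj]
    have h1 : τ i (ι ℝ pi * ι ℝ pj) = ∑ k, (P j k - P i k) * Q i k := by
      have : ι ℝ pi * ι ℝ pj = ι ℝ pi * ι ℝ (pj - pi) := by
        rw [map_sub, mul_sub, ι_sq_zero, sub_zero]
      rw [this, hτ i _ hy0]
      simp [pi, pj, Pi.sub_apply]
    have h2 : τ j (ι ℝ pi * ι ℝ pj) = ∑ k, (P j k - P i k) * Q j k := by
      have hswap : ι ℝ pi * ι ℝ pj = -(ι ℝ pj * ι ℝ pi) := by
        have h := ι_add_mul_swap (R := ℝ) pi pj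
        rw [eq_neg_iff_add_eq_zero]; exact h
      have : ι ℝ pj * ι ℝ pi = ι ℝ pj * ι ℝ (pi - pj) := by
        rw [map_sub, mul_sub, ι_sq_zero, sub_zero]
      rw [hswap, this, map_neg, hτ j _ hy0']
      have : ∑ k, (pi - pj) (Fin.succ k) * Q j k = ∑ k, (P i k - P j k) * Q j k := by
        apply Finset.sum_congr rfl; intro k _; simp [pi, pj, Pi.sub_apply]
      rw [this]
      rw [← Finset.sum_neg_distrib]
      apply Finset.sum_congr rfl; intro k _; ring
    rw [LinearMap.sub_apply, h1, h2, ← Finset.sum_sub_distrib, ← Finset.sum_neg_distrib]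
    apply Finset.sum_congr rfl; intro k _; ring
  constructor
  · intro h i j hij
    rw [key i j, h i j hij, neg_zero]
  · intro h i j hij
    have := h i j hij
    rw [key i j, neg_eq_zero] at this
    exact this
end

section
/- Infinitesimal Pogorelov map to the sphere: let P be a framework in E^d ⊂ ℝ^{d+1} (hyperplane x⁰=1) and P^S = (p_i/‖p_i‖) its central projection to S^d. A velocity field Q = (q_i) is an infinitesimal motion of P if and only if the velocity field Q^S defined by q_i^S = the component tangent to S^d at p_i^S of the appropriately rescaled vector satisfying q_i = pr(‖p_i‖ · q_i^S) (where pr drops the 0-th coordinate and q_i^S ⊥ p_i^S in the Euclidean metric) is an infinitesimal motion of P^S; moreover Q is trivial iff Q^S is trivial. -/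
open Matrix

/-- Central projection of a point of `E^d = {x⁰ = 1} ⊂ ℝ^{d+1}` to the unit
sphere `S^d`. -/
noncomputable def sphProj {d : ℕ} (p : Fin d → ℝ) : Fin (d+1) → ℝ :=
  (Real.sqrt (1 + ∑ l, p l ^ 2))⁻¹ • (Fin.cons 1 p : Fin (d+1) → ℝ)

lemma sum_expand' {d : ℕ} (f g f' g' : Fin d → ℝ) (r s r' s' : ℝ) :
    ∑ k, (r * f k - s * g k) * (r' * f' k - s' * g' k)
      = r*r' * ∑ k, f k * f' k - r*s' * (∑ k, f k * g' k)
        - s*r' * (∑ k, g k * f' k) + s*s' * ∑ k, g k * g' k := by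
  rw [Finset.mul_sum, Finset.mul_sum, Finset.mul_sum, Finset.mul_sum,
    ← Finset.sum_sub_distrib, ← Finset.sum_sub_distrib, ← Finset.sum_add_distrib]
  exact Finset.sum_congr rfl fun k _ => by ring

lemma skew_quad' {m : ℕ} (S : Matrix (Fin m) (Fin m) ℝ) (hS : Sᵀ = -S) (x : Fin m → ℝ) :
    ∑ k, x k * S.mulVec x k = 0 := by
  have h : ∀ k l, S l k = -S k l := fun k l => by
    have := congrFun (congrFun hS k) l
    simpa [Matrix.transpose_apply] using this
  have hT : ∑ k, x k * S.mulVec x k = ∑ k, ∑ l, x k * S k l * x l := by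
    simp only [Matrix.mulVec, dotProduct, Finset.mul_sum]
    exact Finset.sum_congr rfl fun k _ => Finset.sum_congr rfl fun l _ => by ring
  have hU : (∑ k, ∑ l, x l * S l k * x k) = ∑ k, ∑ l, x k * S k l * x l :=
    Finset.sum_comm
  have hz : (∑ k, ∑ l, x k * S k l * x l) + (∑ k, ∑ l, x l * S l k * x k) = 0 := by
    rw [← Finset.sum_add_distrib]
    rw [show (∑ k, ((∑ l, x k * S k l * x l) + ∑ l, x l * S l k * x k)) = ∑ k : Fin m, (0:ℝ) from Finset.sum_congr rfl fun k _ => by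
      rw [← Finset.sum_add_distrib]
      exact Finset.sum_eq_zero fun l _ => by rw [h k l]; ring]
    simp
  rw [hT]; linarith [hU, hz]

/-- infinitesimal Pogorelov map to the sphere: let `P^S` be the
central projection of the Euclidean framework `P` to `S^d`, and let `Q^S` be the
spherical velocity field (tangent to `S^d`) related to `Q` by
`q_i = pr(‖p̂_i‖ · q_i^S)` where `p̂_i = (1, p_i)` and `‖p̂_i‖ = √(1 + ‖p_i‖²)`.
Then `Q` is an infinitesimal motion of `P` iff `Q^S` is an infinitesimal motion of
`P^S`, and `Q` is trivial iff `Q^S` is trivial. -/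
theorem infinitesimal_pogorelov_sphere {V : Type*} [Fintype V] {d : ℕ}
    (Edge : V → V → Prop)
    (P : V → Fin d → ℝ) (hP : ∀ i j, Edge i j → P i ≠ P j)
    (Q : V → Fin d → ℝ) (QS : V → Fin (d+1) → ℝ)
    (htan : ∀ i, ∑ k, sphProj (P i) k * QS i k = 0)
    (hrel : ∀ i k, Q i k = Real.sqrt (1 + ∑ l, P i l ^ 2) * QS i k.succ) :
    ((∀ i j, Edge i j → ∑ k, (P i k - P j k) * (Q i k - Q j k) = 0) ↔
      (∀ i j, Edge i j →
        ∑ k, (sphProj (P i) k - sphProj (P j) k) * (QS i k - QS j k) = 0)) ∧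
    ((∃ (S : Matrix (Fin d) (Fin d) ℝ) (c : Fin d → ℝ),
        Sᵀ = -S ∧ ∀ i, Q i = S.mulVec (P i) + c) ↔
      (∃ A : Matrix (Fin (d+1)) (Fin (d+1)) ℝ,
        Aᵀ = -A ∧ ∀ i, QS i = A.mulVec (sphProj (P i)))) := by

  set n : V → ℝ := fun i => Real.sqrt (1 + ∑ l, P i l ^ 2) with hn_def
  have hn : ∀ i, 0 < n i := fun i => Real.sqrt_pos.2 (by positivity)
  have hn' : ∀ i, n i ≠ 0 := fun i => (hn i).ne'
  have hsph : ∀ i k, sphProj (P i) k = (n i)⁻¹ * (Fin.cons 1 (P i) : Fin (d+1) → ℝ) k := by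
    intro i k; simp [sphProj, hn_def]
  have hs : ∀ i (k : Fin d), QS i (k.succ) = (n i)⁻¹ * Q i k := by
    intro i k
    rw [hrel i k]
    exact (inv_mul_cancel_left₀ (hn' i) (QS i k.succ)).symm
  have hQS0 : ∀ i, QS i 0 = (n i)⁻¹ * -(∑ l, P i l * Q i l) := by
    have tang : ∀ i, QS i 0 + ∑ k, P i k * QS i k.succ = 0 := by
      intro i
      have h0 := htan i
      have he : ∑ k, sphProj (P i) k * QS i k
          = (n i)⁻¹ * ∑ k, (Fin.cons 1 (P i) : Fin (d+1) → ℝ) k * QS i k := by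
        rw [Finset.mul_sum]
        exact Finset.sum_congr rfl fun k _ => by rw [hsph]; ring
      rw [he] at h0
      have h1 : (∑ k, (Fin.cons 1 (P i) : Fin (d+1) → ℝ) k * QS i k) = 0 := by
        rcases mul_eq_zero.mp h0 with h | h
        · exact absurd h (inv_ne_zero (hn' i))
        · exact h
      rw [Fin.sum_univ_succ] at h1
      simpa using h1
    intro i
    have t := tang i
    have h2 : (∑ k, P i k * QS i k.succ) = (n i)⁻¹ * ∑ l, P i l * Q i l := by
      rw [Finset.mul_sum]
      exact Finset.sum_congr rfl fun k _ => by rw [hs i k]; ring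
    rw [h2] at t
    linarith
  have hQS : ∀ i (k : Fin (d+1)),
      QS i k = (n i)⁻¹ * (Fin.cons (-(∑ l, P i l * Q i l)) (Q i) : Fin (d+1) → ℝ) k := by
    intro i k
    induction k using Fin.cases with
    | zero => simpa using hQS0 i
    | succ k => simpa using hs i k
  have key1 : ∀ i j,
      (∑ k, (sphProj (P i) k - sphProj (P j) k) * (QS i k - QS j k))
        = (n i)⁻¹ * (n j)⁻¹ * ∑ k, (P i k - P j k) * (Q i k - Q j k) := by
    intro i j
    have hL : ∀ k : Fin (d+1),
        (sphProj (P i) k - sphProj (P j) k) * (QS i k - QS j k)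
          = ((n i)⁻¹ * (Fin.cons 1 (P i) : Fin (d+1) → ℝ) k
              - (n j)⁻¹ * (Fin.cons 1 (P j) : Fin (d+1) → ℝ) k)
            * ((n i)⁻¹ * (Fin.cons (-(∑ l, P i l * Q i l)) (Q i) : Fin (d+1) → ℝ) k
              - (n j)⁻¹ * (Fin.cons (-(∑ l, P j l * Q j l)) (Q j) : Fin (d+1) → ℝ) k) := by
      intro k; rw [hsph, hsph, hQS, hQS]
    rw [Finset.sum_congr rfl fun k _ => hL k]
    rw [sum_expand' _ _ _ _ ((n i)⁻¹) ((n j)⁻¹) ((n i)⁻¹) ((n j)⁻¹)]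
    have hR : (∑ k, (P i k - P j k) * (Q i k - Q j k))
        = (∑ k, P i k * Q i k) - (∑ k, P i k * Q j k)
          - (∑ k, P j k * Q i k) + (∑ k, P j k * Q j k) := by
      have h := sum_expand' (P i) (P j) (Q i) (Q j) 1 1 1 1
      simpa using h
    rw [hR]
    simp only [Fin.sum_univ_succ, Fin.cons_zero, Fin.cons_succ]
    field_simp [hn' i, hn' j]
    ring
  refine ⟨⟨fun h i j e => ?_, fun h i j e => ?_⟩, ?_⟩
  · rw [key1 i j, h i j e, mul_zero]
  · have h2 := h i j e
    rw [key1 i j] at h2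
    rcases mul_eq_zero.mp h2 with h3 | h3
    · exact absurd h3 (mul_ne_zero (inv_ne_zero (hn' i)) (inv_ne_zero (hn' j)))
    · exact h3
  constructor
  · rintro ⟨S, c, hS, hQ⟩
    refine ⟨Matrix.of (Fin.cons (Fin.cons 0 (fun l => -c l))
        (fun k => (Fin.cons (c k) (S k) : Fin (d+1) → ℝ))), ?_, ?_⟩
    · funext k l
      simp only [Matrix.transpose_apply, Matrix.neg_apply, Matrix.of_apply]
      have hSkl : ∀ a b, S b a = -S a b := fun a b => by
        have h := congrFun (congrFun hS a) b
        simpa using h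
      induction k using Fin.cases with
      | zero =>
        induction l using Fin.cases with
        | zero => simp
        | succ l => simp
      | succ k =>
        induction l using Fin.cases with
        | zero => simp
        | succ l => simpa using hSkl k l
    · intro i
      funext k
      rw [hQS i k]
      simp only [Matrix.mulVec, dotProduct, Matrix.of_apply, hsph]
      rw [Fin.sum_univ_succ]
      induction k using Fin.cases with
      | zero =>
        simp only [Fin.cons_zero, Fin.cons_succ]
        have hsum : (∑ l, P i l * Q i l) = ∑ l, P i l * c l := by
          rw [show Q i = S.mulVec (P i) + c from hQ i]
          simp only [Pi.add_apply, mul_add]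
          rw [Finset.sum_add_distrib, skew_quad' S hS (P i), zero_add]
        have hrhs : ∑ l, -c l * ((n i)⁻¹ * P i l)
            = (n i)⁻¹ * -(∑ l, P i l * c l) := by
          rw [mul_neg, Finset.mul_sum, ← Finset.sum_neg_distrib]
          exact Finset.sum_congr rfl fun l _ => by ring
        rw [hsum, hrhs]
        ring
      | succ k =>
        simp only [Fin.cons_zero, Fin.cons_succ]
        have h2 : ∑ l, S k l * ((n i)⁻¹ * P i l)
            = (n i)⁻¹ * ∑ l, S k l * P i l := by
          rw [Finset.mul_sum]
          exact Finset.sum_congr rfl fun l _ => by ring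
        rw [h2, show Q i = S.mulVec (P i) + c from hQ i]
        simp only [Pi.add_apply, Matrix.mulVec, dotProduct]
        ring
  · rintro ⟨A, hA, hQA⟩
    refine ⟨Matrix.of (fun k l => A k.succ l.succ), (fun k => A k.succ 0), ?_, ?_⟩
    · funext k l
      simp only [Matrix.transpose_apply, Matrix.neg_apply, Matrix.of_apply]
      have h := congrFun (congrFun hA k.succ) l.succ
      simpa using h
    · intro i
      funext k
      rw [hrel i k, show Real.sqrt (1 + ∑ l, P i l ^ 2) = n i from rfl,
        show QS i = A.mulVec (sphProj (P i)) from hQA i]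
      simp only [Matrix.mulVec, dotProduct, hsph, Pi.add_apply, Matrix.of_apply]
      rw [Fin.sum_univ_succ]
      simp only [Fin.cons_zero, Fin.cons_succ]
      have h2 : ∑ l, A k.succ l.succ * ((n i)⁻¹ * P i l)
          = (n i)⁻¹ * ∑ l, A k.succ l.succ * P i l := by
        rw [Finset.mul_sum]
        exact Finset.sum_congr rfl fun l _ => by ring
      rw [h2]
      field_simp [hn' i]
      ring
end

section
/- Blaschke's bipartite flexibility theorem (spherical case): let P be a framework in E^d with bipartite graph (every edge joins a black vertex to a white vertex) whose vertices all lie on the unit sphere centered at the origin. Then the velocity field assigning q_i = p_i to every white vertex and q_i = −p_i to every black vertex is an infinitesimal motion of P. In particular, if this field is not a trivial motion, P is infinitesimally flexible. -/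
open Matrix

/-- Blaschke's bipartite flexibility, spherical case: for a
bipartite framework all of whose vertices lie on the unit sphere, the velocity
field `q_i = p_i` on white vertices and `q_i = −p_i` on black vertices is an
infinitesimal motion; in particular if this field is not trivial, the framework is
infinitesimally flexible. -/
theorem blaschke_bipartite_flexible {V : Type*} [Fintype V] {d : ℕ}
    (Edge : V → V → Prop) (color : V → Bool)
    (P : V → Fin d → ℝ) (hP : ∀ i j, Edge i j → P i ≠ P j)
    (hbip : ∀ i j, Edge i j → color i ≠ color j)
    (hsph : ∀ i, ∑ k, P i k ^ 2 = 1)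
    (Q : V → Fin d → ℝ)
    (hQ : ∀ i, Q i = if color i then P i else -P i) :
    (∀ i j, Edge i j → ∑ k, (P i k - P j k) * (Q i k - Q j k) = 0) ∧
    (¬ (∃ (S : Matrix (Fin d) (Fin d) ℝ) (c : Fin d → ℝ),
        Sᵀ = -S ∧ ∀ i, Q i = S.mulVec (P i) + c) →
      ∃ Q' : V → Fin d → ℝ,
        (∀ i j, Edge i j → ∑ k, (P i k - P j k) * (Q' i k - Q' j k) = 0) ∧
        ¬ (∃ (S : Matrix (Fin d) (Fin d) ℝ) (c : Fin d → ℝ),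
            Sᵀ = -S ∧ ∀ i, Q' i = S.mulVec (P i) + c)) := by
  have main : ∀ i j, Edge i j → ∑ k, (P i k - P j k) * (Q i k - Q j k) = 0 := by
    intro i j hij
    have hc := hbip i j hij
    have h1 := hsph i
    have h2 := hsph j
    have hqi := hQ i
    have hqj := hQ j
    cases hci : color i <;> cases hcj : color j <;> simp [hci, hcj] at hc hqi hqj ⊢
    · have : ∀ k, (P i k - P j k) * (Q i k - Q j k)
          = P j k ^ 2 - P i k ^ 2 := by
        intro k
        rw [hqi, hqj]
        simp; ring
      rw [Finset.sum_congr rfl (fun k _ => this k), Finset.sum_sub_distrib, h1, h2]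
      ring
    · have : ∀ k, (P i k - P j k) * (Q i k - Q j k)
          = P i k ^ 2 - P j k ^ 2 := by
        intro k
        rw [hqi, hqj]
        simp; ring
      rw [Finset.sum_congr rfl (fun k _ => this k), Finset.sum_sub_distrib, h1, h2]
      ring
  exact ⟨main, fun h => ⟨Q, main, h⟩⟩
end
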